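/- (Lemma 4.1) Let N ≥ 1, k > 0, and b₁,…,b_s nonzero reals, and let C₀ be a constant such that ‖∂_x ψ‖ ≤ C₀ N ‖ψ‖ for all ψ ∈ S_N. Suppose U^n ∈ S_N and real-valued Y^{n,i} ∈ S_N, 1 ≤ i ≤ s, satisfy Y^{n,0} = U^n and Y^{n,i} = Y^{n,i−1} + k b_i F((Y^{n,i} + Y^{n,i−1})/2) for 1 ≤ i ≤ s, with |U^n|_∞ ≤ R and |Y^{n,i}|_∞ ≤ R for all i, for some constant R. If (k/2) · max_{1≤i≤s} |b_i| · C₀ N R < 1, then the tuple (Y^{n,1},…,Y^{n,s}) is the unique such solution: any other family (Z^{n,1},…,Z^{n,s}) in S_N satisfying the same equations with the same sup-norm bound R coincides with it. -/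

import Mathlib

noncomputable section

namespace KdVSpec

/-- The L² inner product of two real-valued functions on `(-π, π)`. -/
def L2inner (u v : ℝ → ℝ) : ℝ := ∫ x in (-Real.pi)..Real.pi, u x * v x

/-- The L² norm of a real-valued function on `(-π, π)`. -/
def L2norm (u : ℝ → ℝ) : ℝ := Real.sqrt (∫ x in (-Real.pi)..Real.pi, (u x)^2)

/-- The sup norm of a real-valued function on `[-π, π]`. -/
def LinfNorm (u : ℝ → ℝ) : ℝ := sSup ((fun x => |u x|) '' Set.Icc (-Real.pi) Real.pi)

/-- The `W^{1,∞}` norm `‖v‖_{1,∞} = |v|_∞ + |∂ₓ v|_∞`. -/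
def norm1inf (u : ℝ → ℝ) : ℝ := LinfNorm u + LinfNorm (deriv u)

/-- The `k`-th Fourier coefficient of a (2π-periodic) function on `(-π,π)`. -/
def fCoeff (u : ℝ → ℝ) (k : ℤ) : ℂ :=
  (1 / (2 * Real.pi)) *
    ∫ x in (-Real.pi)..Real.pi, Complex.exp (-(Complex.I * (k : ℂ) * (x : ℂ))) * (u x : ℂ)

/-- The periodic Sobolev norm of order `μ`. -/
def sobNorm (μ : ℝ) (u : ℝ → ℝ) : ℝ :=
  Real.sqrt (∑' k : ℤ, (1 + (k : ℝ)^2) ^ μ * ‖fCoeff u k‖^2)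

/-- `v` is a (real-valued) trigonometric polynomial of degree at most `N`,
i.e. a member of `S_N = span{e^{ikx} : |k| ≤ N}`. -/
def InSN (N : ℕ) (v : ℝ → ℝ) : Prop :=
  ∃ c : ℤ → ℂ, ∀ x : ℝ,
    (v x : ℂ) = ∑ k ∈ Finset.Icc (-(N : ℤ)) (N : ℤ), c k * Complex.exp (Complex.I * (k : ℂ) * (x : ℂ))

/-- The orthogonal L²-projection onto `S_N`, `P_N v = Σ_{|k|≤N} v̂(k) e^{ikx}`. -/
def PN (N : ℕ) (u : ℝ → ℝ) : ℝ → ℝ := fun x =>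
  (∑ k ∈ Finset.Icc (-(N : ℤ)) (N : ℤ), fCoeff u k * Complex.exp (Complex.I * (k : ℂ) * (x : ℂ))).re

/-- Spatial derivative `∂ₓ`. -/
def dx (u : ℝ → ℝ) : ℝ → ℝ := deriv u

/-- Third spatial derivative `∂ₓ³`. -/
def dx3 (u : ℝ → ℝ) : ℝ → ℝ := deriv (deriv (deriv u))

/-- The map `F(v) = -∂ₓ³ v - P_N(v ∂ₓ v)` on `S_N`. -/
def Fmap (N : ℕ) (v : ℝ → ℝ) : ℝ → ℝ := fun x =>
  -(dx3 v x) - PN N (fun y => v y * dx v y) x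

/-- `u` solves the periodic KdV equation `u_t + u u_x + u_{xxx} = 0` on the time set `I`
(with 2π-periodicity in space). -/
def IsKdVSolution (u : ℝ → ℝ → ℝ) (I : Set ℝ) : Prop :=
  (∀ t ∈ I, ∀ x : ℝ, u t (x + 2 * Real.pi) = u t x) ∧
  (∀ t ∈ I, ∀ x : ℝ,
    deriv (fun s => u s x) t + u t x * dx (u t) x + dx3 (u t) x = 0)

/-- `w` is the semidiscrete Fourier–Galerkin approximation (with initial value `P_N u₀`)
on the time set `I`: `w(t) ∈ S_N`, `w` is differentiable in time, `w(0) = P_N u₀` and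
`(∂_t w + w ∂ₓ w + ∂ₓ³ w, χ) = 0` for every `χ ∈ S_N`. -/
def SemidiscreteOn (N : ℕ) (u0 : ℝ → ℝ) (w : ℝ → ℝ → ℝ) (I : Set ℝ) : Prop :=
  (∀ t ∈ I, InSN N (w t)) ∧
  (∀ x : ℝ, ∀ t ∈ I, DifferentiableAt ℝ (fun s => w s x) t) ∧
  (∀ x : ℝ, w 0 x = PN N u0 x) ∧
  (∀ t ∈ I, ∀ χ : ℝ → ℝ, InSN N χ →
    L2inner (fun x => deriv (fun s => w s x) t + w t x * dx (w t) x + dx3 (w t) x) χ = 0)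



section Aux
open Complex intervalIntegral MeasureTheory

open Complex intervalIntegral

/-- complex trig sum with coefficients `c` and degree `M` -/
def SumC (c : ℤ → ℂ) (M : ℕ) : ℝ → ℂ := fun x =>
  ∑ k ∈ Finset.Icc (-(M : ℤ)) (M : ℤ), c k * Complex.exp (Complex.I * (k : ℂ) * (x : ℂ))

lemma hasDerivAt_expI (k : ℤ) (x : ℝ) :
    HasDerivAt (fun y : ℝ => Complex.exp (Complex.I * (k : ℂ) * (y : ℂ)))
      (Complex.I * (k : ℂ) * Complex.exp (Complex.I * (k : ℂ) * (x : ℂ))) x := by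
  have h1 : HasDerivAt (fun y : ℝ => (Complex.I * (k : ℂ) * (y : ℂ)))
      (Complex.I * (k : ℂ)) x := by
    simpa using (Complex.ofRealCLM.hasDerivAt (x := x)).const_mul (Complex.I * (k : ℂ))
  simpa [mul_comm] using h1.cexp

lemma hasDerivAt_SumC (c : ℤ → ℂ) (M : ℕ) (x : ℝ) :
    HasDerivAt (SumC c M) (SumC (fun k => c k * (Complex.I * (k : ℂ))) M x) x := by
  unfold SumC
  apply HasDerivAt.fun_sum
  intro k _
  simpa [mul_comm, mul_left_comm, mul_assoc] using (hasDerivAt_expI k x).const_mul (c k)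

lemma continuous_SumC (c : ℤ → ℂ) (M : ℕ) : Continuous (SumC c M) :=
  continuous_finset_sum _ fun k _ => by
    exact continuous_const.mul ((Complex.continuous_exp).comp (by continuity))

lemma periodic_SumC (c : ℤ → ℂ) (M : ℕ) : Function.Periodic (SumC c M) (2 * Real.pi) := by
  intro x
  unfold SumC
  refine Finset.sum_congr rfl fun k _ => ?_
  have : Complex.exp (Complex.I * (k:ℂ) * ((x + 2*Real.pi : ℝ) : ℂ))
      = Complex.exp (Complex.I * (k:ℂ) * (x:ℂ)) * Complex.exp ((k:ℂ) * (2 * Real.pi * Complex.I)) := by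
    rw [← Complex.exp_add]; push_cast; ring_nf
  rw [this, Complex.exp_int_mul_two_pi_mul_I, mul_one]
/-- `f` is represented by coefficients `c` up to degree `M`. -/
def Rep (M : ℕ) (c : ℤ → ℂ) (f : ℝ → ℝ) : Prop := ∀ x : ℝ, (f x : ℂ) = SumC c M x

namespace Rep

lemma continuous {M c f} (h : Rep M c f) : Continuous f := by
  have : f = fun x => (SumC c M x).re := by
    funext x; rw [← h x]; simp
  rw [this]; exact (Complex.continuous_re).comp (continuous_SumC c M)

lemma periodic {M c f} (h : Rep M c f) (x : ℝ) : f (x + 2 * Real.pi) = f x := by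
  have := periodic_SumC c M x
  have h2 : ((f (x + 2*Real.pi) : ℝ) : ℂ) = ((f x : ℝ) : ℂ) := by rw [h, h, this]
  exact_mod_cast h2

lemma hasDerivAt {M c f} (h : Rep M c f) (x : ℝ) :
    HasDerivAt f ((SumC (fun k => c k * (Complex.I * (k:ℂ))) M x).re) x := by
  have hf : f = fun x => (SumC c M x).re := by funext x; rw [← h x]; simp
  rw [hf]
  exact (Complex.reCLM.hasFDerivAt).comp_hasDerivAt x (hasDerivAt_SumC c M x)

/-- The derivative sum is real-valued, and `deriv f` is represented. -/
lemma deriv {M c f} (h : Rep M c f) :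
    Rep M (fun k => c k * (Complex.I * (k:ℂ))) (deriv f) := by
  intro x
  have hd := h.hasDerivAt x
  rw [hd.deriv]
  -- need: im of the derivative sum is 0
  have him : ∀ y : ℝ, (SumC (fun k => c k * (Complex.I * (k:ℂ))) M y).im = 0 := by
    intro y
    have h0 : (fun y : ℝ => (SumC c M y).im) = fun _ => (0 : ℝ) := by
      funext z; rw [← h z]; simp
    have him' : HasDerivAt (fun y : ℝ => (SumC c M y).im)
        ((SumC (fun k => c k * (Complex.I * (k:ℂ))) M y).im) y :=
      (Complex.imCLM.hasFDerivAt).comp_hasDerivAt y (hasDerivAt_SumC c M y)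
    rw [h0] at him'
    have := him'.deriv
    simpa using this.symm
  exact (Complex.ext (by simp) (by simp [him x])).symm

lemma sub {M c d f g} (hf : Rep M c f) (hg : Rep M d g) :
    Rep M (c - d) (fun x => f x - g x) := by
  intro x
  push_cast
  rw [hf x, hg x]
  unfold SumC
  rw [← Finset.sum_sub_distrib]
  exact Finset.sum_congr rfl fun k _ => by simp [sub_mul]

end Rep
/-- ∫_{-π}^{π} e^{imx} dx = 0 for m ≠ 0, = 2π for m = 0. -/
lemma integral_expI (m : ℤ) :
    (∫ x in (-Real.pi)..Real.pi, Complex.exp (Complex.I * (m:ℂ) * (x:ℂ)))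
      = if m = 0 then (2 * Real.pi : ℂ) else 0 := by
  rcases eq_or_ne m 0 with hm | hm
  · subst hm; simp
    push_cast; ring
  · rw [if_neg hm]
    have hc : (Complex.I * (m:ℂ)) ≠ 0 := by
      simp [Complex.I_ne_zero, Complex.ext_iff]
      exact_mod_cast hm
    rw [integral_exp_mul_complex hc]
    have heq : Complex.exp (Complex.I * (m:ℂ) * ((Real.pi:ℝ):ℂ)) =
        Complex.exp (Complex.I * (m:ℂ) * ((-Real.pi : ℝ):ℂ)) := by
      have h1 : Complex.I * (m:ℂ) * ((Real.pi:ℝ):ℂ)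
          = Complex.I * (m:ℂ) * ((-Real.pi : ℝ):ℂ) + (m : ℂ) * (2 * Real.pi * Complex.I) := by
        push_cast; ring
      rw [h1, Complex.exp_add, Complex.exp_int_mul_two_pi_mul_I, mul_one]
    rw [heq, sub_self, zero_div]

lemma intervalIntegrable_expI (m : ℤ) (g : ℝ → ℝ) (hg : Continuous g) :
    IntervalIntegrable (fun x => Complex.exp (Complex.I * (m:ℂ) * (x:ℂ)) * (g x : ℂ))
      MeasureTheory.volume (-Real.pi) Real.pi := by
  apply Continuous.intervalIntegrable
  exact ((Complex.continuous_exp).comp (by continuity)).mul (Complex.continuous_ofReal.comp hg)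

/-- F1: Fourier coefficients of a represented function. -/
lemma Rep.fCoeff_eq {M : ℕ} {c : ℤ → ℂ} {f : ℝ → ℝ} (h : Rep M c f) {m : ℤ}
    (hm : m ∈ Finset.Icc (-(M:ℤ)) (M:ℤ)) : fCoeff f m = c m := by
  unfold fCoeff
  have hint : (∫ x in (-Real.pi)..Real.pi,
      Complex.exp (-(Complex.I * (m : ℂ) * (x : ℂ))) * (f x : ℂ))
      = ∑ k ∈ Finset.Icc (-(M:ℤ)) (M:ℤ),
          c k * ∫ x in (-Real.pi)..Real.pi, Complex.exp (Complex.I * ((k - m : ℤ):ℂ) * (x:ℂ)) := by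
    have hptw : ∀ x : ℝ, Complex.exp (-(Complex.I * (m : ℂ) * (x : ℂ))) * (f x : ℂ)
        = ∑ k ∈ Finset.Icc (-(M:ℤ)) (M:ℤ),
            c k * Complex.exp (Complex.I * ((k - m : ℤ):ℂ) * (x:ℂ)) := by
      intro x
      rw [h x]
      unfold SumC
      rw [Finset.mul_sum]
      refine Finset.sum_congr rfl fun k _ => ?_
      rw [show Complex.I * ((k - m : ℤ):ℂ) * (x:ℂ) = (-(Complex.I * (m:ℂ) * (x:ℂ))) + Complex.I * (k:ℂ) * (x:ℂ) by push_cast; ring, Complex.exp_add]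
      ring
    rw [intervalIntegral.integral_congr (fun x _ => hptw x)]
    rw [intervalIntegral.integral_finset_sum]
    · refine Finset.sum_congr rfl fun k _ => ?_
      rw [intervalIntegral.integral_const_mul]
    · intro k _
      apply Continuous.intervalIntegrable
      exact continuous_const.mul ((Complex.continuous_exp).comp (by continuity))
  rw [hint]
  have : ∀ k ∈ Finset.Icc (-(M:ℤ)) (M:ℤ),
      c k * (∫ x in (-Real.pi)..Real.pi, Complex.exp (Complex.I * ((k - m : ℤ):ℂ) * (x:ℂ)))
      = if k = m then c m * (2 * Real.pi : ℂ) else 0 := by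
    intro k _
    rw [integral_expI (k - m)]
    rcases eq_or_ne k m with rfl | hk
    · simp
    · rw [if_neg (sub_ne_zero.mpr hk), if_neg hk, mul_zero]
  rw [Finset.sum_congr rfl this, Finset.sum_ite_eq' _ m, if_pos hm]
  have hpi : (Real.pi : ℂ) ≠ 0 := by exact_mod_cast Real.pi_ne_zero
  field_simp
/-- F2: conjugation symmetry of fCoeff for real g. -/
lemma fCoeff_neg (g : ℝ → ℝ) (m : ℤ) :
    fCoeff g (-m) = (starRingEnd ℂ) (fCoeff g m) := by
  unfold fCoeff
  rw [map_mul]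
  congr 1
  · rw [show ((1:ℂ)/(2*(Real.pi:ℂ))) = ((1/(2*Real.pi):ℝ):ℂ) by push_cast; ring]
    rw [Complex.conj_ofReal]
  · rw [show ((starRingEnd ℂ) (∫ x in (-Real.pi)..Real.pi,
        Complex.exp (-(Complex.I * (m : ℂ) * (x : ℂ))) * (g x : ℂ)))
      = ∫ x in (-Real.pi)..Real.pi, (starRingEnd ℂ)
        (Complex.exp (-(Complex.I * (m : ℂ) * (x : ℂ))) * (g x : ℂ)) by
      simp only [intervalIntegral, integral_conj, map_sub]]
    refine intervalIntegral.integral_congr fun x _ => ?_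
    rw [map_mul, ← Complex.exp_conj]
    congr 1
    · congr 1
      simp [Complex.ext_iff]
    · simp

/-- the key identity: ∫ g·χ = 2π Re Σ c_k fCoeff g (−k), for real continuous g and Rep χ. -/
lemma L2inner_eq_sum {N : ℕ} {c : ℤ → ℂ} {χ : ℝ → ℝ} (hχ : Rep N c χ)
    (g : ℝ → ℝ) (hg : Continuous g) :
    L2inner g χ = 2 * Real.pi *
      (∑ k ∈ Finset.Icc (-(N:ℤ)) (N:ℤ), c k * fCoeff g (-k)).re := by
  have hfc : ∀ k : ℤ, (∫ x in (-Real.pi)..Real.pi,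
      Complex.exp (Complex.I * (k:ℂ) * (x:ℂ)) * (g x : ℂ)) = 2 * Real.pi * fCoeff g (-k) := by
    intro k
    unfold fCoeff
    have h2 : ∀ x : ℝ, Complex.exp (-(Complex.I * ((-k : ℤ):ℂ) * (x:ℂ)))
        = Complex.exp (Complex.I * (k:ℂ) * (x:ℂ)) := by
      intro x; congr 1; push_cast; ring
    have e1 : (∫ x in (-Real.pi)..Real.pi,
        Complex.exp (-(Complex.I * ((-k : ℤ):ℂ) * (x:ℂ))) * (g x : ℂ))
        = ∫ x in (-Real.pi)..Real.pi, Complex.exp (Complex.I * (k:ℂ) * (x:ℂ)) * (g x : ℂ) :=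
      intervalIntegral.integral_congr (fun x _ => by rw [h2 x])
    rw [e1]
    have hpi : (2 * (Real.pi:ℂ)) ≠ 0 := by
      simp [Complex.ext_iff,Real.pi_ne_zero]
    rw [← mul_assoc]
    rw [show (2 * (Real.pi:ℂ)) * (1 / (2 * (Real.pi:ℂ))) = 1 from by field_simp]
    rw [one_mul]
  -- L2inner g χ = Re ∫ (g:ℂ)·SumC
  have h1 : L2inner g χ = (∫ x in (-Real.pi)..Real.pi, ((g x : ℂ) * SumC c N x)).re := by
    unfold L2inner
    rw [show (∫ x in (-Real.pi)..Real.pi, ((g x : ℂ) * SumC c N x)).re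
        = ∫ x in (-Real.pi)..Real.pi, ((g x : ℂ) * SumC c N x).re from by
      symm
      simpa using Complex.reCLM.intervalIntegral_comp_comm
        (((Complex.continuous_ofReal.comp hg).mul (continuous_SumC c N)).intervalIntegrable _ _)]
    refine intervalIntegral.integral_congr fun x _ => ?_
    rw [Complex.re_ofReal_mul, ← hχ x]
    simp
  rw [h1]
  have h3 : (∫ x in (-Real.pi)..Real.pi, ((g x : ℂ) * SumC c N x))
      = ∑ k ∈ Finset.Icc (-(N:ℤ)) (N:ℤ), c k * (2 * Real.pi * fCoeff g (-k)) := by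
    have : ∀ x : ℝ, (g x : ℂ) * SumC c N x
        = ∑ k ∈ Finset.Icc (-(N:ℤ)) (N:ℤ),
            c k * (Complex.exp (Complex.I * (k:ℂ) * (x:ℂ)) * (g x : ℂ)) := by
      intro x; unfold SumC; rw [Finset.mul_sum]; exact Finset.sum_congr rfl fun k _ => by ring
    rw [intervalIntegral.integral_congr (fun x _ => this x),
        intervalIntegral.integral_finset_sum
          (fun k _ => ((intervalIntegrable_expI k g hg).const_mul (c k)))]
    refine Finset.sum_congr rfl fun k _ => ?_
    rw [intervalIntegral.integral_const_mul, hfc k]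
  rw [h3]
  rw [show ∑ k ∈ Finset.Icc (-(N:ℤ)) (N:ℤ), c k * (2 * Real.pi * fCoeff g (-k))
      = (2 * Real.pi : ℂ) * ∑ k ∈ Finset.Icc (-(N:ℤ)) (N:ℤ), c k * fCoeff g (-k) from by
    rw [Finset.mul_sum]; exact Finset.sum_congr rfl fun k _ => by ring]
  rw [show ((2 * Real.pi : ℂ)) = ((2 * Real.pi : ℝ) : ℂ) by push_cast; rfl, Complex.re_ofReal_mul]

/-- the truncated Fourier series of a real function is represented (is real-valued). -/
lemma PN_rep (N : ℕ) (g : ℝ → ℝ) : Rep N (fCoeff g) (PN N g) := by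
  intro x
  have hconj : (starRingEnd ℂ) (SumC (fCoeff g) N x) = SumC (fCoeff g) N x := by
    unfold SumC
    rw [map_sum]
    refine Finset.sum_nbij' (fun k => -k) (fun k => -k) ?_ ?_ ?_ ?_ ?_
    · intro k hk; simp at hk ⊢; omega
    · intro k hk; simp at hk ⊢; omega
    · intro k _; ring
    · intro k _; ring
    · intro k _
      rw [map_mul, ← fCoeff_neg, ← Complex.exp_conj]
      congr 2
      push_cast
      simp [Complex.ext_iff]
  have : (SumC (fCoeff g) N x).im = 0 := Complex.conj_eq_iff_im.mp hconj
  unfold PN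
  exact (Complex.ext (by simp [SumC]) (by simpa [SumC] using this)).symm

/-- P_N is self-adjoint / projection identity against S_N test functions. -/
lemma L2inner_PN {N : ℕ} {c : ℤ → ℂ} {χ : ℝ → ℝ} (hχ : Rep N c χ)
    (g : ℝ → ℝ) (hg : Continuous g) :
    L2inner (PN N g) χ = L2inner g χ := by
  rw [L2inner_eq_sum hχ (PN N g) (PN_rep N g).continuous, L2inner_eq_sum hχ g hg]
  congr 2
  refine Finset.sum_congr rfl fun k hk => ?_
  rw [(PN_rep N g).fCoeff_eq (by simp at hk ⊢; omega)]

/-- zero L² norm forces a represented function to vanish identically. -/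
lemma Rep.eq_zero_of_L2inner_self {N : ℕ} {c : ℤ → ℂ} {e : ℝ → ℝ} (he : Rep N c e)
    (h0 : L2inner e e = 0) : ∀ x, e x = 0 := by
  have key := L2inner_eq_sum he e he.continuous
  rw [h0] at key
  have hsum : ∀ k ∈ Finset.Icc (-(N:ℤ)) (N:ℤ), c k * fCoeff e (-k) = (Complex.normSq (c k) : ℂ) := by
    intro k hk
    rw [fCoeff_neg, he.fCoeff_eq hk, Complex.mul_conj]
  rw [Finset.sum_congr rfl hsum] at key
  have hre : (∑ k ∈ Finset.Icc (-(N:ℤ)) (N:ℤ), (Complex.normSq (c k) : ℂ)).re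
      = ∑ k ∈ Finset.Icc (-(N:ℤ)) (N:ℤ), Complex.normSq (c k) := by
    rw [← Complex.ofReal_sum]; simp
  rw [hre] at key
  have hS : (∑ k ∈ Finset.Icc (-(N:ℤ)) (N:ℤ), Complex.normSq (c k)) = 0 := by
    have hpi : (0:ℝ) < 2 * Real.pi := by positivity
    by_contra hne
    have : 0 < ∑ k ∈ Finset.Icc (-(N:ℤ)) (N:ℤ), Complex.normSq (c k) := by
      rcases lt_or_gt_of_ne hne with h | h
      · exfalso
        exact absurd (Finset.sum_nonneg fun k _ => Complex.normSq_nonneg _) (not_le.mpr h)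
      · exact h
    nlinarith
  have hc : ∀ k ∈ Finset.Icc (-(N:ℤ)) (N:ℤ), c k = 0 := by
    intro k hk
    have := (Finset.sum_eq_zero_iff_of_nonneg fun k _ => Complex.normSq_nonneg (c k)).mp hS k hk
    exact Complex.normSq_eq_zero.mp this
  intro x
  have := he x
  rw [show SumC c N x = 0 from Finset.sum_eq_zero fun k hk => by rw [hc k hk, zero_mul]] at this
  exact_mod_cast this
lemma pi_le : (-Real.pi) ≤ Real.pi := by linarith [Real.pi_pos]

/-- Cauchy–Schwarz for the interval L² pairing. -/
lemma abs_integral_mul_le (f g : ℝ → ℝ) (hf : Continuous f) (hg : Continuous g) :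
    |∫ x in (-Real.pi)..Real.pi, f x * g x| ≤
      Real.sqrt (∫ x in (-Real.pi)..Real.pi, (f x)^2) *
      Real.sqrt (∫ x in (-Real.pi)..Real.pi, (g x)^2) := by
  set A := ∫ x in (-Real.pi)..Real.pi, (g x)^2 with hA
  set B := ∫ x in (-Real.pi)..Real.pi, f x * g x with hB
  set C := ∫ x in (-Real.pi)..Real.pi, (f x)^2 with hC
  have hAnn : 0 ≤ A := intervalIntegral.integral_nonneg pi_le (fun x _ => sq_nonneg _)
  have hCnn : 0 ≤ C := intervalIntegral.integral_nonneg pi_le (fun x _ => sq_nonneg _)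
  have hquad : ∀ t : ℝ, 0 ≤ A * (t * t) + (2 * B) * t + C := by
    intro t
    have : A * (t * t) + (2 * B) * t + C
        = ∫ x in (-Real.pi)..Real.pi, (f x + t * g x)^2 := by
      rw [show (fun x => (f x + t * g x)^2) = fun x =>
          t * t * (g x ^ 2) + (2 * t) * (f x * g x) + f x ^ 2 from funext fun x => by ring]
      rw [intervalIntegral.integral_add, intervalIntegral.integral_add,
          intervalIntegral.integral_const_mul, intervalIntegral.integral_const_mul]
      · ring
      · exact (continuous_const.mul (hg.pow 2)).intervalIntegrable _ _
      · exact (continuous_const.mul (hf.mul hg)).intervalIntegrable _ _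
      · exact ((continuous_const.mul (hg.pow 2)).intervalIntegrable _ _).add
          ((continuous_const.mul (hf.mul hg)).intervalIntegrable _ _)
      · exact (hf.pow 2).intervalIntegrable _ _
    rw [this]
    exact intervalIntegral.integral_nonneg pi_le (fun x _ => sq_nonneg _)
  have hd := discrim_le_zero hquad
  unfold discrim at hd
  have hB2 : B^2 ≤ C * A := by nlinarith
  calc |B| = Real.sqrt (B^2) := (Real.sqrt_sq_eq_abs B).symm
    _ ≤ Real.sqrt (C * A) := Real.sqrt_le_sqrt hB2
    _ = Real.sqrt C * Real.sqrt A := Real.sqrt_mul hCnn A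

/-- integration by parts for 2π-periodic functions. -/
lemma integral_mul_deriv (u v u' v' : ℝ → ℝ)
    (hu : ∀ x, HasDerivAt u (u' x) x) (hv : ∀ x, HasDerivAt v (v' x) x)
    (hu' : Continuous u') (hv' : Continuous v')
    (hper : u Real.pi * v Real.pi = u (-Real.pi) * v (-Real.pi)) :
    ∫ x in (-Real.pi)..Real.pi, u x * v' x = - ∫ x in (-Real.pi)..Real.pi, u' x * v x := by
  have hucont : Continuous u := (Differentiable.continuous (fun x => (hu x).differentiableAt))
  have hvcont : Continuous v := (Differentiable.continuous (fun x => (hv x).differentiableAt))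
  have h := intervalIntegral.integral_deriv_mul_eq_sub (a := -Real.pi) (b := Real.pi)
      (u := u) (v := v) (u' := u') (v' := v')
      (fun x _ => hu x) (fun x _ => hv x)
      (hu'.intervalIntegrable _ _) (hv'.intervalIntegrable _ _)
  rw [hper, sub_self] at h
  have hsplit : (∫ x in (-Real.pi)..Real.pi, u' x * v x + u x * v' x)
      = (∫ x in (-Real.pi)..Real.pi, u' x * v x) + ∫ x in (-Real.pi)..Real.pi, u x * v' x :=
    intervalIntegral.integral_add ((hu'.mul hvcont).intervalIntegrable _ _)
      ((hucont.mul hv').intervalIntegrable _ _)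
  rw [hsplit] at h
  linarith

/-- pointwise bound by the sup norm for continuous functions. -/
lemma abs_le_LinfNorm (f : ℝ → ℝ) (hf : Continuous f) {x : ℝ}
    (hx : x ∈ Set.Icc (-Real.pi) Real.pi) : |f x| ≤ LinfNorm f := by
  apply le_csSup
  · exact (isCompact_Icc.image (continuous_abs.comp hf)).bddAbove
  · exact ⟨x, hx, rfl⟩

lemma LinfNorm_nonneg (f : ℝ → ℝ) : 0 ≤ LinfNorm f :=
  Real.sSup_nonneg fun y hy => by obtain ⟨x, _, rfl⟩ := hy; exact abs_nonneg _

lemma Rep.hasDerivAt' {M c f} (h : Rep M c f) (x : ℝ) :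
    HasDerivAt f (_root_.deriv f x) x :=
  (h.hasDerivAt x).differentiableAt.hasDerivAt

lemma Rep.endpoint {M c f} (h : Rep M c f) : f Real.pi = f (-Real.pi) := by
  conv_lhs => rw [show Real.pi = -Real.pi + 2 * Real.pi by ring]
  exact h.periodic _

lemma Rep.addDiv2 {M c d f g} (hf : Rep M c f) (hg : Rep M d g) :
    Rep M (fun k => (c k + d k) / 2) (fun x => (f x + g x) / 2) := by
  intro x
  push_cast
  rw [hf x, hg x]
  unfold SumC
  rw [← Finset.sum_add_distrib, Finset.sum_div]
  exact Finset.sum_congr rfl fun k _ => by ring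

/-- triple-integration-by-parts skew symmetry of ∂ₓ³. -/
lemma skew3 {M : ℕ} {cf cg : ℤ → ℂ} {f g : ℝ → ℝ} (hf : Rep M cf f) (hg : Rep M cg g) :
    (∫ x in (-Real.pi)..Real.pi, f x * _root_.deriv (_root_.deriv (_root_.deriv g)) x)
      = - ∫ x in (-Real.pi)..Real.pi,
          _root_.deriv (_root_.deriv (_root_.deriv f)) x * g x := by
  have hf1 := hf.deriv; have hf2 := hf1.deriv
  have hg1 := hg.deriv; have hg2 := hg1.deriv
  have s1 : (∫ x in (-Real.pi)..Real.pi, f x * _root_.deriv (_root_.deriv (_root_.deriv g)) x)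
      = - ∫ x in (-Real.pi)..Real.pi, _root_.deriv f x * _root_.deriv (_root_.deriv g) x :=
    integral_mul_deriv f (_root_.deriv (_root_.deriv g)) (_root_.deriv f) _
      hf.hasDerivAt' hg2.hasDerivAt' hf1.continuous hg2.deriv.continuous
      (by rw [hf.endpoint, hg2.endpoint])
  have s2 : (∫ x in (-Real.pi)..Real.pi, _root_.deriv f x * _root_.deriv (_root_.deriv g) x)
      = - ∫ x in (-Real.pi)..Real.pi, _root_.deriv (_root_.deriv f) x * _root_.deriv g x :=
    integral_mul_deriv (_root_.deriv f) (_root_.deriv g) (_root_.deriv (_root_.deriv f)) _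
      hf1.hasDerivAt' hg1.hasDerivAt' hf2.continuous hg2.continuous
      (by rw [hf1.endpoint, hg1.endpoint])
  have s3 : (∫ x in (-Real.pi)..Real.pi, _root_.deriv (_root_.deriv f) x * _root_.deriv g x)
      = - ∫ x in (-Real.pi)..Real.pi, _root_.deriv (_root_.deriv (_root_.deriv f)) x * g x :=
    integral_mul_deriv (_root_.deriv (_root_.deriv f)) g
      (_root_.deriv (_root_.deriv (_root_.deriv f))) _
      hf2.hasDerivAt' hg.hasDerivAt' hf2.deriv.continuous hg1.continuous
      (by rw [hf2.endpoint, hg.endpoint])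
  rw [s1, s2, s3]; ring

end Aux

set_option maxHeartbeats 2000000 in
/-- one-stage uniqueness. -/
lemma step_unique (N : ℕ) (k bi C₀ R : ℝ) (hk : 0 < k)
    (hC₀ : ∀ ψ : ℝ → ℝ, InSN N ψ → L2norm (dx ψ) ≤ C₀ * N * L2norm ψ)
    (P Yi Zi : ℝ → ℝ) (hP : InSN N P) (hYi : InSN N Yi) (hZi : InSN N Zi)
    (hPinf : LinfNorm P ≤ R) (hYinf : LinfNorm Yi ≤ R) (hZinf : LinfNorm Zi ≤ R)
    (hrecY : ∀ x, Yi x = P x + k * bi * Fmap N (fun y => (Yi y + P y) / 2) x)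
    (hrecZ : ∀ x, Zi x = P x + k * bi * Fmap N (fun y => (Zi y + P y) / 2) x)
    (hsmall : (k / 2) * |bi| * C₀ * N * R < 1) : ∀ x, Yi x = Zi x := by
  classical
  obtain ⟨cP, hcP⟩ := hP
  obtain ⟨cY, hcY⟩ := hYi
  obtain ⟨cZ, hcZ⟩ := hZi
  have hrP : Rep N cP P := hcP
  have hrY : Rep N cY Yi := hcY
  have hrZ : Rep N cZ Zi := hcZ
  have hR0 : 0 ≤ R := le_trans (LinfNorm_nonneg P) hPinf
  set mY : ℝ → ℝ := fun y => (Yi y + P y) / 2 with hmYdef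
  set mZ : ℝ → ℝ := fun y => (Zi y + P y) / 2 with hmZdef
  set e : ℝ → ℝ := fun x => Yi x - Zi x with hedef
  have hrmY : Rep N (fun k => (cY k + cP k) / 2) mY := hrY.addDiv2 hrP
  have hrmZ : Rep N (fun k => (cZ k + cP k) / 2) mZ := hrZ.addDiv2 hrP
  have hre : Rep N (cY - cZ) e := hrY.sub hrZ
  -- the error equation
  have heq : ∀ x, e x = k * bi *
      (Fmap N mY x - Fmap N mZ x) := by
    intro x
    simp only [hedef]
    rw [hrecY x, hrecZ x]
    ring
  -- midpoint difference
  have hmdiff : ∀ x, mY x - mZ x = e x / 2 := by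
    intro x; simp only [hmYdef, hmZdef, hedef]; ring
  -- the interval integral A = ‖e‖²
  set A : ℝ := ∫ x in (-Real.pi)..Real.pi, e x * e x with hAdef
  have hA_nonneg : 0 ≤ A :=
    intervalIntegral.integral_nonneg pi_le (fun x _ => mul_self_nonneg _)
  -- the nonlinear terms
  set gY : ℝ → ℝ := fun y => mY y * dx mY y with hgYdef
  set gZ : ℝ → ℝ := fun y => mZ y * dx mZ y with hgZdef
  have hgYc : Continuous gY := hrmY.continuous.mul hrmY.deriv.continuous
  have hgZc : Continuous gZ := hrmZ.continuous.mul hrmZ.deriv.continuous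
  -- dispersive term integrates to zero against e
  have hT : (∫ x in (-Real.pi)..Real.pi, dx3 e x * e x) = 0 := by
    have h1 := skew3 hre hre
    simp only [dx3] at *
    have h2 : (∫ x in (-Real.pi)..Real.pi,
        e x * _root_.deriv (_root_.deriv (_root_.deriv e)) x)
        = ∫ x in (-Real.pi)..Real.pi,
            _root_.deriv (_root_.deriv (_root_.deriv e)) x * e x :=
      intervalIntegral.integral_congr fun x _ => mul_comm _ _
    rw [h2] at h1
    linarith
  have hI : (∫ x in (-Real.pi)..Real.pi, e x * (dx3 mZ x - dx3 mY x))
      = 0 := by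
    have hY3 := skew3 hre hrmY
    have hZ3 := skew3 hre hrmZ
    simp only [dx3] at *
    have hsplit : (∫ x in (-Real.pi)..Real.pi,
        e x * (_root_.deriv (_root_.deriv (_root_.deriv mZ)) x
          - _root_.deriv (_root_.deriv (_root_.deriv mY)) x))
        = (∫ x in (-Real.pi)..Real.pi,
            e x * _root_.deriv (_root_.deriv (_root_.deriv mZ)) x)
          - ∫ x in (-Real.pi)..Real.pi,
            e x * _root_.deriv (_root_.deriv (_root_.deriv mY)) x := by
      rw [← intervalIntegral.integral_sub]
      · exact intervalIntegral.integral_congr fun x _ => by ring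
      · exact (hre.continuous.mul hrmZ.deriv.deriv.deriv.continuous).intervalIntegrable _ _
      · exact (hre.continuous.mul hrmY.deriv.deriv.deriv.continuous).intervalIntegrable _ _
    rw [hsplit, hY3, hZ3]
    have hsub : (∫ x in (-Real.pi)..Real.pi,
        _root_.deriv (_root_.deriv (_root_.deriv e)) x * mY x)
        - (∫ x in (-Real.pi)..Real.pi,
            _root_.deriv (_root_.deriv (_root_.deriv e)) x * mZ x)
        = ∫ x in (-Real.pi)..Real.pi,
            _root_.deriv (_root_.deriv (_root_.deriv e)) x * (e x / 2) := by
      rw [← intervalIntegral.integral_sub]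
      · refine intervalIntegral.integral_congr fun x _ => ?_
        rw [← hmdiff x]; ring
      · exact (hre.deriv.deriv.deriv.continuous.mul hrmY.continuous).intervalIntegrable _ _
      · exact (hre.deriv.deriv.deriv.continuous.mul hrmZ.continuous).intervalIntegrable _ _
    have hhalf : (∫ x in (-Real.pi)..Real.pi,
        _root_.deriv (_root_.deriv (_root_.deriv e)) x * (e x / 2))
        = (1/2) * ∫ x in (-Real.pi)..Real.pi,
            _root_.deriv (_root_.deriv (_root_.deriv e)) x * e x := by
      rw [← intervalIntegral.integral_const_mul]
      exact intervalIntegral.integral_congr fun x _ => by ring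
    have hTT : (∫ x in (-Real.pi)..Real.pi,
        _root_.deriv (_root_.deriv (_root_.deriv e)) x * e x) = 0 := hT
    linarith [hsub, hhalf, hTT]
  -- projection terms
  have hJY : (∫ x in (-Real.pi)..Real.pi, e x * PN N gY x)
      = ∫ x in (-Real.pi)..Real.pi, gY x * e x := by
    have h1 : (∫ x in (-Real.pi)..Real.pi, e x * PN N gY x)
        = L2inner (PN N gY) e :=
      intervalIntegral.integral_congr fun x _ => mul_comm _ _
    rw [h1, L2inner_PN hre gY hgYc]; rfl
  have hJZ : (∫ x in (-Real.pi)..Real.pi, e x * PN N gZ x)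
      = ∫ x in (-Real.pi)..Real.pi, gZ x * e x := by
    have h1 : (∫ x in (-Real.pi)..Real.pi, e x * PN N gZ x)
        = L2inner (PN N gZ) e :=
      intervalIntegral.integral_congr fun x _ => mul_comm _ _
    rw [h1, L2inner_PN hre gZ hgZc]; rfl
  -- the quadratic term via integration by parts
  set q : ℝ → ℝ := fun y => (mY y)^2 - (mZ y)^2 with hqdef
  set q' : ℝ → ℝ := fun y =>
    2 * mY y * _root_.deriv mY y - 2 * mZ y * _root_.deriv mZ y with hq'def
  have hq'c : Continuous q' := by
    apply Continuous.sub
    · exact (continuous_const.mul hrmY.continuous).mul hrmY.deriv.continuous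
    · exact (continuous_const.mul hrmZ.continuous).mul hrmZ.deriv.continuous
  have hqder : ∀ x, HasDerivAt q (q' x) x := by
    intro x
    have h1 : HasDerivAt (fun y => (mY y)^2) (2 * mY x * _root_.deriv mY x) x := by
      have := (hrmY.hasDerivAt' x).fun_pow 2
      simpa [mul_comm, mul_assoc] using this
    have h2 : HasDerivAt (fun y => (mZ y)^2) (2 * mZ x * _root_.deriv mZ x) x := by
      have := (hrmZ.hasDerivAt' x).fun_pow 2
      simpa [mul_comm, mul_assoc] using this
    exact h1.sub h2
  have hqend : e Real.pi * q Real.pi = e (-Real.pi) * q (-Real.pi) := by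
    simp only [hqdef]
    rw [hre.endpoint, hrmY.endpoint, hrmZ.endpoint]
  have hibp : (∫ x in (-Real.pi)..Real.pi, e x * q' x)
      = - ∫ x in (-Real.pi)..Real.pi, _root_.deriv e x * q x :=
    integral_mul_deriv e q (_root_.deriv e) q'
      hre.hasDerivAt' hqder hre.deriv.continuous hq'c hqend
  -- pointwise: gY - gZ = q'/2
  have hgq : ∀ x, gY x - gZ x = q' x / 2 := by
    intro x; simp only [hgYdef, hgZdef, hq'def, dx]; ring
  -- assemble: A = k*bi/2 * ∫ e' q ... first: A = k bi ∫ e (FY - FZ)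
  have hexp : A = k * bi * ((∫ x in (-Real.pi)..Real.pi, e x * (dx3 mZ x - dx3 mY x))
      + ∫ x in (-Real.pi)..Real.pi, e x * (gZ x - gY x)) := by
    have h1 : ∀ x, e x * e x = k * bi * (e x * (dx3 mZ x - dx3 mY x)
        + (e x * (PN N gZ x - PN N gY x))) := by
      intro x
      nth_rewrite 2 [heq x]
      simp only [Fmap, hgYdef, hgZdef]
      ring
    have h2 : A = ∫ x in (-Real.pi)..Real.pi, k * bi * (e x * (dx3 mZ x - dx3 mY x)
        + (e x * (PN N gZ x - PN N gY x))) := by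
      rw [hAdef]; exact intervalIntegral.integral_congr fun x _ => h1 x
    rw [h2, intervalIntegral.integral_const_mul]
    congr 1
    have hc1 : Continuous fun x => e x * (dx3 mZ x - dx3 mY x) := by
      apply hre.continuous.mul
      exact hrmZ.deriv.deriv.deriv.continuous.sub hrmY.deriv.deriv.deriv.continuous
    have hc2 : Continuous fun x => e x * (PN N gZ x - PN N gY x) := by
      apply hre.continuous.mul
      exact ((PN_rep N gZ).continuous.sub (PN_rep N gY).continuous)
    rw [intervalIntegral.integral_add (hc1.intervalIntegrable _ _) (hc2.intervalIntegrable _ _)]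
    congr 1
    have h3 : (∫ x in (-Real.pi)..Real.pi, e x * (PN N gZ x - PN N gY x))
        = (∫ x in (-Real.pi)..Real.pi, e x * PN N gZ x)
          - ∫ x in (-Real.pi)..Real.pi, e x * PN N gY x := by
      rw [← intervalIntegral.integral_sub]
      · exact intervalIntegral.integral_congr fun x _ => by ring
      · exact (hre.continuous.mul (PN_rep N gZ).continuous).intervalIntegrable _ _
      · exact (hre.continuous.mul (PN_rep N gY).continuous).intervalIntegrable _ _
    rw [h3, hJY, hJZ]
    rw [← intervalIntegral.integral_sub (f := fun x => gZ x * e x) (g := fun x => gY x * e x) ((hgZc.mul hre.continuous).intervalIntegrable _ _)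
        ((hgYc.mul hre.continuous).intervalIntegrable _ _)]
    exact (intervalIntegral.integral_congr fun x _ => by ring).symm
  rw [hI, zero_add] at hexp
  -- rewrite nonlinear integral via q'
  have hq2 : (∫ x in (-Real.pi)..Real.pi, e x * (gZ x - gY x))
      = (1/2) * ∫ x in (-Real.pi)..Real.pi, _root_.deriv e x * q x := by
    have h1 : (∫ x in (-Real.pi)..Real.pi, e x * (gZ x - gY x))
        = ∫ x in (-Real.pi)..Real.pi, (-(1/2)) * (e x * q' x) := by
      refine intervalIntegral.integral_congr fun x _ => ?_
      linear_combination (-(e x)) * hgq x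
    rw [h1, intervalIntegral.integral_const_mul, hibp]
    ring
  rw [hq2] at hexp
  -- Cauchy–Schwarz and the inverse estimate
  have hCS : |∫ x in (-Real.pi)..Real.pi, _root_.deriv e x * q x|
      ≤ Real.sqrt (∫ x in (-Real.pi)..Real.pi, (_root_.deriv e x)^2)
        * Real.sqrt (∫ x in (-Real.pi)..Real.pi, (q x)^2) :=
    abs_integral_mul_le _ _ hre.deriv.continuous
      (((hrmY.continuous.pow 2).sub (hrmZ.continuous.pow 2)))
  -- bound on ∫ q²
  have hqbound : (∫ x in (-Real.pi)..Real.pi, (q x)^2)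
      ≤ R^2 * ∫ x in (-Real.pi)..Real.pi, (e x)^2 := by
    have hmono : ∀ x ∈ Set.Icc (-Real.pi) Real.pi, (q x)^2 ≤ R^2 * (e x)^2 := by
      intro x hx
      have hY' : |Yi x| ≤ R := le_trans (abs_le_LinfNorm Yi hrY.continuous hx) hYinf
      have hZ' : |Zi x| ≤ R := le_trans (abs_le_LinfNorm Zi hrZ.continuous hx) hZinf
      have hP' : |P x| ≤ R := le_trans (abs_le_LinfNorm P hrP.continuous hx) hPinf
      have hq : q x = (mY x + mZ x) * (e x / 2) := by
        rw [← hmdiff x]; simp only [hqdef]; ring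
      have hmyb : |mY x| ≤ R := by
        have hm : mY x = (Yi x + P x) / 2 := rfl
        rw [hm, abs_div, abs_two]
        have := abs_add_le (Yi x) (P x)
        linarith
      have hmzb : |mZ x| ≤ R := by
        have hm : mZ x = (Zi x + P x) / 2 := rfl
        rw [hm, abs_div, abs_two]
        have := abs_add_le (Zi x) (P x)
        linarith
      have hσ : |mY x + mZ x| ≤ 2 * R := by
        have := abs_add_le (mY x) (mZ x)
        linarith
      have hq2' : (q x)^2 = ((mY x + mZ x))^2 * (e x)^2 / 4 := by rw [hq]; ring
      have hs2 : (mY x + mZ x)^2 ≤ (2*R)^2 := by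
        rw [← sq_abs]
        exact pow_le_pow_left₀ (abs_nonneg _) hσ 2
      have := mul_le_mul_of_nonneg_right hs2 (sq_nonneg (e x))
      rw [hq2']
      nlinarith [this]
    exact le_trans
      (intervalIntegral.integral_mono_on pi_le
        ((((hrmY.continuous.pow 2).sub (hrmZ.continuous.pow 2)).pow 2).intervalIntegrable _ _)
        ((continuous_const.mul (hre.continuous.pow 2)).intervalIntegrable _ _) hmono)
      (le_of_eq (intervalIntegral.integral_const_mul _ _))
  -- identify A with ∫ e²
  have hAsq : A = ∫ x in (-Real.pi)..Real.pi, (e x)^2 :=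
    intervalIntegral.integral_congr fun x _ => by ring
  -- the inverse inequality
  have hinv : Real.sqrt (∫ x in (-Real.pi)..Real.pi, (_root_.deriv e x)^2)
      ≤ C₀ * N * Real.sqrt A := by
    have := hC₀ e ⟨cY - cZ, fun x => hre x⟩
    simp only [L2norm, dx] at this
    rw [hAsq]
    exact this
  have hsqrtq : Real.sqrt (∫ x in (-Real.pi)..Real.pi, (q x)^2) ≤ R * Real.sqrt A := by
    have h1 : Real.sqrt (∫ x in (-Real.pi)..Real.pi, (q x)^2)
        ≤ Real.sqrt (R^2 * ∫ x in (-Real.pi)..Real.pi, (e x)^2) :=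
      Real.sqrt_le_sqrt hqbound
    rw [Real.sqrt_mul (sq_nonneg R), Real.sqrt_sq hR0, ← hAsq] at h1
    exact h1
  -- final contraction estimate
  have hfinal : A ≤ (k / 2) * |bi| * C₀ * N * R * A := by
    have h0 : A = k * bi * ((1/2) * ∫ x in (-Real.pi)..Real.pi, _root_.deriv e x * q x) := hexp
    have habs : A ≤ |A| := le_abs_self A
    have h1 : |A| ≤ |k * bi| * ((1/2) *
        |∫ x in (-Real.pi)..Real.pi, _root_.deriv e x * q x|) := by
      have habs2 : |k * bi * ((1/2) * ∫ x in (-Real.pi)..Real.pi, _root_.deriv e x * q x)|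
          = |k * bi| * ((1/2) * |∫ x in (-Real.pi)..Real.pi, _root_.deriv e x * q x|) := by
        rw [abs_mul, abs_mul ((1:ℝ)/2), abs_of_nonneg (by norm_num : (0:ℝ) ≤ (1/2:ℝ))]
      rw [h0, habs2]
    have hsq0 : (0:ℝ) ≤ Real.sqrt (∫ x in (-Real.pi)..Real.pi, (_root_.deriv e x)^2) :=
      Real.sqrt_nonneg _
    have hsq1 : (0:ℝ) ≤ Real.sqrt (∫ x in (-Real.pi)..Real.pi, (q x)^2) := Real.sqrt_nonneg _
    have hprod : |∫ x in (-Real.pi)..Real.pi, _root_.deriv e x * q x|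
        ≤ (C₀ * N * Real.sqrt A) * (R * Real.sqrt A) := by
      calc |∫ x in (-Real.pi)..Real.pi, _root_.deriv e x * q x|
          ≤ _ := hCS
        _ ≤ (C₀ * N * Real.sqrt A) * (R * Real.sqrt A) :=
          mul_le_mul hinv hsqrtq hsq1 (le_trans hsq0 hinv)
    have hsqA : Real.sqrt A * Real.sqrt A = A := Real.mul_self_sqrt hA_nonneg
    have hkb : |k * bi| = k * |bi| := by rw [abs_mul, abs_of_pos hk]
    calc A ≤ |A| := habs
      _ ≤ |k * bi| * ((1/2) * |∫ x in (-Real.pi)..Real.pi, _root_.deriv e x * q x|) := h1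
      _ ≤ |k * bi| * ((1/2) * ((C₀ * N * Real.sqrt A) * (R * Real.sqrt A))) := by
          have hkb0 : (0:ℝ) ≤ |k * bi| := abs_nonneg _
          apply mul_le_mul_of_nonneg_left _ hkb0
          apply mul_le_mul_of_nonneg_left hprod (by norm_num)
      _ = (k / 2) * |bi| * C₀ * N * R * (Real.sqrt A * Real.sqrt A) := by rw [hkb]; ring
      _ = (k / 2) * |bi| * C₀ * N * R * A := by rw [hsqA]
  have hAzero : A = 0 := by nlinarith [hfinal, hsmall, hA_nonneg]
  have hzero : ∀ x, e x = 0 := hre.eq_zero_of_L2inner_self hAzero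
  intro x
  have := hzero x
  simp only [hedef] at this
  linarith

/-- Lemma 4.1: uniqueness of the stages of one step of the `s`-stage
IMR-composition scheme among families bounded by `R` in the sup norm, under the
condition `(k/2)·max_{1≤i≤s}|b_i|·C₀·N·R < 1` (stated equivalently for each `i`). -/
theorem composition_stages_unique
    (N : ℕ) (hN : 1 ≤ N) (k : ℝ) (hk : 0 < k) (s : ℕ) (hs : 1 ≤ s)
    (b : ℕ → ℝ) (hb : ∀ i, 1 ≤ i → i ≤ s → b i ≠ 0)
    (C₀ : ℝ) (hC₀ : ∀ ψ : ℝ → ℝ, InSN N ψ → L2norm (dx ψ) ≤ C₀ * N * L2norm ψ)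
    (R : ℝ)
    (Un : ℝ → ℝ) (hUn : InSN N Un) (hUninf : LinfNorm Un ≤ R)
    (Y Z : ℕ → ℝ → ℝ)
    (hY0 : ∀ x : ℝ, Y 0 x = Un x) (hZ0 : ∀ x : ℝ, Z 0 x = Un x)
    (hYSN : ∀ i, 1 ≤ i → i ≤ s → InSN N (Y i))
    (hZSN : ∀ i, 1 ≤ i → i ≤ s → InSN N (Z i))
    (hYrec : ∀ i, 1 ≤ i → i ≤ s → ∀ x : ℝ,
      Y i x = Y (i-1) x + k * b i * Fmap N (fun y => (Y i y + Y (i-1) y) / 2) x)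
    (hZrec : ∀ i, 1 ≤ i → i ≤ s → ∀ x : ℝ,
      Z i x = Z (i-1) x + k * b i * Fmap N (fun y => (Z i y + Z (i-1) y) / 2) x)
    (hYinf : ∀ i, 1 ≤ i → i ≤ s → LinfNorm (Y i) ≤ R)
    (hZinf : ∀ i, 1 ≤ i → i ≤ s → LinfNorm (Z i) ≤ R)
    (hsmall : ∀ i, 1 ≤ i → i ≤ s → (k / 2) * |b i| * C₀ * N * R < 1) :
    ∀ i, 1 ≤ i → i ≤ s → ∀ x : ℝ, Y i x = Z i x := by
  have main : ∀ i, i ≤ s → ∀ x : ℝ, Y i x = Z i x := by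
    intro i
    induction i with
    | zero => intro _ x; rw [hY0 x, hZ0 x]
    | succ n ih =>
      intro hn1 x
      have hns : n ≤ s := by omega
      have hprev : ∀ x, Y n x = Z n x := ih hns
      -- facts about the previous stage P := Y n
      have hPSN : InSN N (Y n) := by
        rcases Nat.eq_zero_or_pos n with rfl | hn0
        · obtain ⟨c, hc⟩ := hUn
          exact ⟨c, fun x => by rw [hY0 x]; exact hc x⟩
        · exact hYSN n hn0 hns
      have hPinf : LinfNorm (Y n) ≤ R := by
        rcases Nat.eq_zero_or_pos n with rfl | hn0
        · rw [show Y 0 = Un from funext hY0]; exact hUninf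
        · exact hYinf n hn0 hns
      have h1n : 1 ≤ n + 1 := by omega
      have hrecY' : ∀ x, Y (n+1) x = Y n x
          + k * b (n+1) * Fmap N (fun y => (Y (n+1) y + Y n y) / 2) x := by
        have := hYrec (n+1) h1n hn1
        simpa using this
      have hrecZ' : ∀ x, Z (n+1) x = Y n x
          + k * b (n+1) * Fmap N (fun y => (Z (n+1) y + Y n y) / 2) x := by
        have h := hZrec (n+1) h1n hn1
        intro x
        have h2 := h x
        simp only [Nat.add_sub_cancel] at h2
        have hfun : (fun y => (Z (n+1) y + Z n y) / 2)
            = (fun y => (Z (n+1) y + Y n y) / 2) := funext fun y => by rw [hprev y]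
        rw [h2, hprev x, hfun]
      exact step_unique N k (b (n+1)) C₀ R hk hC₀ (Y n) (Y (n+1)) (Z (n+1))
        hPSN (hYSN (n+1) h1n hn1) (hZSN (n+1) h1n hn1)
        hPinf (hYinf (n+1) h1n hn1) (hZinf (n+1) h1n hn1)
        hrecY' hrecZ' (hsmall (n+1) h1n hn1) x
  intro i hi1 his x
  exact main i his x


end KdVSpec
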